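/- Let f(x) = x^n h(x^{(q-1)/m}) over F_q with f(0) = 0 and h(0) ≠ 0, and suppose h has no roots in μ_m. If f is m-nice, then f permutes the nonzero elements whose ((q-1)/m)-th power lies on a ψ_f-cycle if and only if gcd(n, (q-1)/m) = 1; in particular, if gcd(n, q-1) = 1 and f is m-nice with h nonvanishing on μ_m, then f is a bijection on F_q^*. -/

import Mathlib

theorem stmt19 {F : Type*} [Field F] [Fintype F] (q n m : ℕ)
    (hq : Fintype.card F = q) (hm : m ∣ q - 1) (hm0 : 0 < m) (hn : 0 < n)
    (h : Polynomial F) (hh0 : h.eval 0 ≠ 0)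
    (f ψ : F → F)
    (hf : ∀ x, f x = x ^ n * h.eval (x ^ ((q - 1) / m)))
    (hψ : ∀ x, ψ x = x ^ n * (h.eval x) ^ ((q - 1) / m))
    -- f is m-nice
    (hmap : ∀ x : F, x ^ m = 1 → ψ x = 0 ∨ (ψ x) ^ m = 1)
    (hinj : ∀ x y : F, x ^ m = 1 → y ^ m = 1 → ψ x ≠ 0 → ψ y ≠ 0 → ψ x = ψ y → x = y)
    -- h has no roots in μ_m
    (hroots : ∀ x : F, x ^ m = 1 → h.eval x ≠ 0) :
    (Set.BijOn f
        {x : F | x ≠ 0 ∧ ∃ p, 0 < p ∧ ψ^[p] (x ^ ((q - 1) / m)) = x ^ ((q - 1) / m)}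
        {x : F | x ≠ 0 ∧ ∃ p, 0 < p ∧ ψ^[p] (x ^ ((q - 1) / m)) = x ^ ((q - 1) / m)} ↔
      Nat.gcd n ((q - 1) / m) = 1) ∧
    (Nat.gcd n (q - 1) = 1 → Set.BijOn f {x : F | x ≠ 0} {x : F | x ≠ 0}) := by
  classical
  set s := (q - 1) / m with hsdef
  have hq2 : 2 ≤ q := hq ▸ Fintype.one_lt_card
  have hms : m * s = q - 1 := Nat.mul_div_cancel' hm
  have hsdvd : s ∣ q - 1 := Nat.div_dvd_of_dvd hm
  have hs0 : 0 < s := Nat.div_pos (Nat.le_of_dvd (by omega) hm) hm0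
  -- basic facts
  have hT0 : ∀ x : F, x ^ m = 1 → x ≠ 0 := by
    intro x hx hx0
    rw [hx0, zero_pow hm0.ne'] at hx
    exact zero_ne_one hx
  have hψne : ∀ x : F, x ^ m = 1 → ψ x ≠ 0 := by
    intro x hx
    rw [hψ]
    exact mul_ne_zero (pow_ne_zero _ (hT0 x hx)) (pow_ne_zero _ (hroots x hx))
  have hψT : ∀ x : F, x ^ m = 1 → (ψ x) ^ m = 1 := by
    intro x hx
    rcases hmap x hx with h0 | h1
    · exact absurd h0 (hψne x hx)
    · exact h1
  have hxs : ∀ x : F, x ≠ 0 → (x ^ s) ^ m = 1 := by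
    intro x hx
    rw [← pow_mul, mul_comm s m, hms, ← hq]
    exact FiniteField.pow_card_sub_one_eq_one x hx
  have hiter : ∀ (k : ℕ) (x : F), x ^ m = 1 → (ψ^[k] x) ^ m = 1 := by
    intro k
    induction k with
    | zero => intro x hx; simpa using hx
    | succ k ih =>
      intro x hx
      rw [Function.iterate_succ_apply]
      exact ih _ (hψT x hx)
  have hcancel : ∀ (k : ℕ) (a b : F), a ^ m = 1 → b ^ m = 1 →
      ψ^[k] a = ψ^[k] b → a = b := by
    intro k
    induction k with
    | zero => intro a b _ _ hab; simpa using hab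
    | succ k ih =>
      intro a b ha hb hab
      rw [Function.iterate_succ_apply, Function.iterate_succ_apply] at hab
      exact hinj a b ha hb (hψne a ha) (hψne b hb)
        (ih _ _ (hψT a ha) (hψT b hb) hab)
  have hperiodic : ∀ x : F, x ^ m = 1 → ∃ p, 0 < p ∧ ψ^[p] x = x := by
    intro x hx
    obtain ⟨i, j, hij, hijeq⟩ :=
      Finite.exists_ne_map_eq_of_infinite (fun k : ℕ => ψ^[k] x)
    rcases Nat.lt_or_ge i j with hlt | hge
    · refine ⟨j - i, by omega, ?_⟩
      apply hcancel i _ _ (hiter _ _ hx) hx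
      rw [← Function.iterate_add_apply]
      have : i + (j - i) = j := by omega
      rw [this]; exact hijeq.symm
    · have hlt : j < i := lt_of_le_of_ne hge (Ne.symm hij)
      refine ⟨i - j, by omega, ?_⟩
      apply hcancel j _ _ (hiter _ _ hx) hx
      rw [← Function.iterate_add_apply]
      have : j + (i - j) = i := by omega
      rw [this]; exact hijeq
  -- the set is all of F^*
  have hSeq : {x : F | x ≠ 0 ∧ ∃ p, 0 < p ∧ ψ^[p] (x ^ s) = x ^ s} = {x : F | x ≠ 0} := by
    ext x
    simp only [Set.mem_setOf_eq]
    constructor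
    · exact fun hx => hx.1
    · exact fun hx => ⟨hx, hperiodic _ (hxs x hx)⟩
  rw [hSeq]
  have key : ∀ x : F, (f x) ^ s = ψ (x ^ s) := by
    intro x
    rw [hf, hψ, mul_pow, ← pow_mul, mul_comm n s, pow_mul]
  have fne : ∀ x : F, x ≠ 0 → f x ≠ 0 := by
    intro x hx
    rw [hf]
    exact mul_ne_zero (pow_ne_zero _ hx) (hroots _ (hxs x hx))
  -- forward: BijOn → gcd = 1
  have fwd : Set.BijOn f {x : F | x ≠ 0} {x : F | x ≠ 0} → Nat.gcd n s = 1 := by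
    intro hbij
    by_contra hd
    set d := Nat.gcd n s with hddef
    have hd0 : 0 < d := Nat.gcd_pos_of_pos_left _ hn
    have hd2 : 2 ≤ d := by omega
    have hds : d ∣ s := Nat.gcd_dvd_right _ _
    have hdn : d ∣ n := Nat.gcd_dvd_left _ _
    have hdq : d ∣ q - 1 := hds.trans hsdvd
    -- element of order d
    obtain ⟨g, hg⟩ := IsCyclic.exists_generator (α := Fˣ)
    have hgord : orderOf g = q - 1 := by
      rw [orderOf_eq_card_of_forall_mem_zpowers hg, Nat.card_eq_fintype_card,
        Fintype.card_units, hq]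
    set ζ : Fˣ := g ^ ((q - 1) / d) with hζdef
    have hζd : ζ ^ d = 1 := by
      rw [hζdef, ← pow_mul, Nat.div_mul_cancel hdq, ← hgord, pow_orderOf_eq_one]
    have hζ1 : ζ ≠ 1 := by
      intro hζ1
      have := orderOf_dvd_of_pow_eq_one (n := (q - 1) / d) (x := g) hζ1
      rw [hgord] at this
      have h1 : (q - 1) / d ≠ 0 := by
        intro h0
        have h4 := Nat.div_mul_cancel hdq
        rw [h0, zero_mul] at h4
        omega
      have h2 : q - 1 ≤ (q - 1) / d := Nat.le_of_dvd (Nat.pos_of_ne_zero h1) this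
      have h3 : (q - 1) / d < q - 1 := Nat.div_lt_self (by omega) hd2
      omega
    have hζn : (ζ : F) ^ n = 1 := by
      obtain ⟨k, hk⟩ := hdn
      have h5 : ζ ^ n = 1 := by rw [hk, pow_mul, hζd, one_pow]
      have := congrArg Units.val h5
      simpa using this
    have hζs : (ζ : F) ^ s = 1 := by
      obtain ⟨k, hk⟩ := hds
      have h5 : ζ ^ s = 1 := by rw [hk, pow_mul, hζd, one_pow]
      have := congrArg Units.val h5
      simpa using this
    have hfeq : f (ζ : F) = f 1 := by
      rw [hf, hf, hζn, hζs, one_pow, one_pow]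
    have : (ζ : F) = 1 := hbij.injOn (by simp [Set.mem_setOf_eq, ζ.ne_zero])
      (by simp) hfeq
    exact hζ1 (Units.ext this)
  -- backward: gcd = 1 → BijOn
  have bwd : Nat.gcd n s = 1 → Set.BijOn f {x : F | x ≠ 0} {x : F | x ≠ 0} := by
    intro hgcd
    have hmaps : Set.MapsTo f {x : F | x ≠ 0} {x : F | x ≠ 0} := fun x hx => fne x hx
    have hinjF : Set.InjOn f {x : F | x ≠ 0} := by
      intro x hx y hy hxy
      have hx' : x ≠ 0 := hx
      have hy' : y ≠ 0 := hy
      have h1 : ψ (x ^ s) = ψ (y ^ s) := by rw [← key, ← key, hxy]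
      have h2 : x ^ s = y ^ s :=
        hinj _ _ (hxs x hx') (hxs y hy') (hψne _ (hxs x hx')) (hψne _ (hxs y hy')) h1
      have h3 : x ^ n = y ^ n := by
        have hc : h.eval (x ^ s) ≠ 0 := hroots _ (hxs x hx')
        have := hxy
        rw [hf, hf, h2] at this
        exact mul_right_cancel₀ (h2 ▸ hc) this
      -- Bezout
      set u : Fˣ := Units.mk0 x hx' with hu
      set v : Fˣ := Units.mk0 y hy' with hv
      have hun : u ^ n = v ^ n := Units.ext (by simpa [hu, hv] using h3)
      have hus : u ^ s = v ^ s := Units.ext (by simpa [hu, hv] using h2)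
      have hbez : (1 : ℤ) = n * Nat.gcdA n s + s * Nat.gcdB n s := by
        have := Nat.gcd_eq_gcd_ab n s
        rw [hgcd] at this
        exact_mod_cast this
      have huv : u = v := by
        calc u = u ^ (1 : ℤ) := (zpow_one u).symm
        _ = u ^ ((n : ℤ) * Nat.gcdA n s + (s : ℤ) * Nat.gcdB n s) := by rw [← hbez]
        _ = (u ^ n) ^ Nat.gcdA n s * (u ^ s) ^ Nat.gcdB n s := by
            rw [zpow_add, zpow_mul, zpow_mul, zpow_natCast, zpow_natCast]
        _ = (v ^ n) ^ Nat.gcdA n s * (v ^ s) ^ Nat.gcdB n s := by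
            rw [hun, hus]
        _ = v ^ ((n : ℤ) * Nat.gcdA n s + (s : ℤ) * Nat.gcdB n s) := by
            rw [zpow_add, zpow_mul, zpow_mul, zpow_natCast, zpow_natCast]
        _ = v ^ (1 : ℤ) := by rw [← hbez]
        _ = v := zpow_one v
      have := congrArg Units.val huv
      simpa [hu, hv] using this
    have hfin : Set.Finite {x : F | x ≠ 0} := Set.toFinite _
    exact (Set.Finite.injOn_iff_bijOn_of_mapsTo hfin hmaps).mp hinjF
  refine ⟨⟨fwd, bwd⟩, fun hg => bwd ?_⟩
  have : Nat.gcd n s ∣ Nat.gcd n (q - 1) :=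
    Nat.dvd_gcd (Nat.gcd_dvd_left _ _) ((Nat.gcd_dvd_right _ _).trans hsdvd)
  rw [hg] at this
  exact Nat.eq_one_of_dvd_one this
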